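/- Let L ≥ 1, let v_s ∈ ℝ^m be a standard basis vector, and for each l ∈ {1,…,L} let W₂^l ∈ ℝ^{m×m} satisfy ‖W₂^l‖ ≤ (c₂₀ + R₂/√m)√m (spectral norm), and let Σ'^l ∈ ℝ^{m×m} be a diagonal matrix whose diagonal entries have absolute value at most L_σ. Define the backward ADMM-CSNet vectors b^L = (1/√m) v_s and b^{l−1} = ((2/√m)(W₂^l)ᵀ − I) Σ'^l b^l for l = L, L−1, …, 1. Then for every l ∈ {0,1,…,L}, ‖b^l‖ ≤ L_σ^{L−l} (2(c₂₀ + R₂/√m) + 1)^{L−l}. In particular, at initialization (R₂ = 0), ‖b^l‖ ≤ L_σ^{L−l} (2c₂₀ + 1)^{L−l}. -/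

import Mathlib

open scoped BigOperators Matrix

/-- The spectral (ℓ²-operator) norm of a real matrix. -/
noncomputable def specNorm {m n : ℕ} (M : Matrix (Fin m) (Fin n) ℝ) : ℝ :=
  ‖LinearMap.toContinuousLinearMap (Matrix.toEuclideanLin M)‖

lemma specNorm_nonneg {m n : ℕ} (M : Matrix (Fin m) (Fin n) ℝ) : 0 ≤ specNorm M :=
  norm_nonneg _

lemma mulVec_norm_le {m n : ℕ} (M : Matrix (Fin m) (Fin n) ℝ) (x : EuclideanSpace ℝ (Fin n)) :
    ‖(WithLp.equiv 2 (Fin m → ℝ)).symm (M.mulVec (WithLp.equiv 2 (Fin n → ℝ) x))‖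
      ≤ specNorm M * ‖x‖ := by
  show ‖WithLp.toLp 2 (M *ᵥ WithLp.ofLp x)‖ ≤ specNorm M * ‖x‖
  rw [← Matrix.toEuclideanLin_apply]
  exact (LinearMap.toContinuousLinearMap (Matrix.toEuclideanLin M)).le_opNorm x

lemma specNorm_transpose {m : ℕ} (M : Matrix (Fin m) (Fin m) ℝ) :
    specNorm Mᵀ = specNorm M := by
  have h : Mᵀ = Mᴴ := by ext i j; simp [Matrix.conjTranspose]
  unfold specNorm
  rw [h, Matrix.toEuclideanLin_conjTranspose_eq_adjoint,
    LinearMap.adjoint_toContinuousLinearMap]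
  exact ContinuousLinearMap.adjoint.norm_map _

lemma specNorm_smul_sub_one_le {m : ℕ} (c : ℝ) (M : Matrix (Fin m) (Fin m) ℝ) :
    specNorm (c • M - 1) ≤ |c| * specNorm M + 1 := by
  unfold specNorm
  rw [map_sub, map_sub, map_smul, map_smul]
  refine (norm_sub_le _ _).trans (add_le_add ?_ ?_)
  · exact (ContinuousLinearMap.opNorm_smul_le c _).trans
      (le_of_eq (by rw [Real.norm_eq_abs]))
  · have h1 : Matrix.toEuclideanLin (1 : Matrix (Fin m) (Fin m) ℝ) = LinearMap.id := by
      ext x i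
      simp [Matrix.toEuclideanLin_apply]
    rw [h1]
    exact ContinuousLinearMap.norm_id_le

lemma diag_mulVec_norm_le {m : ℕ} (dv : Fin m → ℝ) (Lσ : ℝ) (hLσ : 0 ≤ Lσ)
    (h : ∀ i, |dv i| ≤ Lσ) (x : EuclideanSpace ℝ (Fin m)) :
    ‖(WithLp.equiv 2 (Fin m → ℝ)).symm
        ((Matrix.diagonal dv).mulVec (WithLp.equiv 2 (Fin m → ℝ) x))‖ ≤ Lσ * ‖x‖ := by
  set y : EuclideanSpace ℝ (Fin m) := (WithLp.equiv 2 (Fin m → ℝ)).symm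
        ((Matrix.diagonal dv).mulVec (WithLp.equiv 2 (Fin m → ℝ) x)) with hy
  rw [EuclideanSpace.norm_eq y, EuclideanSpace.norm_eq x]
  have key : ∑ i, ‖y i‖ ^ 2 ≤ Lσ ^ 2 * ∑ i, ‖x i‖ ^ 2 := by
    rw [Finset.mul_sum]
    apply Finset.sum_le_sum
    intro i _
    have hyi : y i = dv i * x i := by
      rw [hy]; simp [Matrix.mulVec_diagonal]
    rw [hyi, Real.norm_eq_abs, Real.norm_eq_abs, abs_mul, mul_pow]
    have h1 : |dv i| ^ 2 ≤ Lσ ^ 2 := pow_le_pow_left₀ (abs_nonneg _) (h i) 2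
    exact mul_le_mul_of_nonneg_right h1 (by positivity)
  calc Real.sqrt (∑ i, ‖y i‖ ^ 2) ≤ Real.sqrt (Lσ ^ 2 * ∑ i, ‖x i‖ ^ 2) :=
        Real.sqrt_le_sqrt key
    _ = Lσ * Real.sqrt (∑ i, ‖x i‖ ^ 2) := by
        rw [Real.sqrt_mul (sq_nonneg _), Real.sqrt_sq hLσ]

/-- Bound on the backward (gradient) vectors of an `L`-layer ADMM-CSNet:
if `‖W₂^l‖ ≤ (c₂₀ + R₂/√m)√m` and the diagonal entries of `Σ'^l` are bounded
by `L_σ`, then the vectors `b^L = (1/√m)v_s`,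
`b^{l−1} = ((2/√m)(W₂^l)ᵀ − I) Σ'^l b^l` satisfy
`‖b^l‖ ≤ L_σ^{L−l}(2(c₂₀ + R₂/√m) + 1)^{L−l}`; in particular, at
initialization (`R₂ = 0`), `‖b^l‖ ≤ L_σ^{L−l}(2c₂₀ + 1)^{L−l}`. -/
theorem admm_backward_vector_norm_bound
    (m L : ℕ) (hL : 1 ≤ L) (L_σ c₂₀ R₂ : ℝ)
    (s : Fin m)
    (W₂ : ℕ → Matrix (Fin m) (Fin m) ℝ)
    (hW₂ : ∀ l, 1 ≤ l → l ≤ L →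
      specNorm (W₂ l) ≤ (c₂₀ + R₂ / Real.sqrt m) * Real.sqrt m)
    (d : ℕ → Fin m → ℝ)
    (hd : ∀ l, 1 ≤ l → l ≤ L → ∀ i, |d l i| ≤ L_σ)
    (b : ℕ → EuclideanSpace ℝ (Fin m))
    (hbL : b L = (Real.sqrt m)⁻¹ • (EuclideanSpace.single s (1 : ℝ)))
    (hbrec : ∀ l, 1 ≤ l → l ≤ L →
      b (l - 1) =
        (WithLp.toLp 2 (((2 * (Real.sqrt m)⁻¹) • (W₂ l)ᵀ - 1).mulVec
            ((Matrix.diagonal (d l)).mulVec (b l))) :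
          EuclideanSpace ℝ (Fin m))) :
    (∀ l ≤ L, ‖b l‖ ≤
      L_σ ^ (L - l) * (2 * (c₂₀ + R₂ / Real.sqrt m) + 1) ^ (L - l)) ∧
    (R₂ = 0 → ∀ l ≤ L, ‖b l‖ ≤ L_σ ^ (L - l) * (2 * c₂₀ + 1) ^ (L - l)) := by
  have hm : 0 < m := s.pos
  have hsm1 : (1 : ℝ) ≤ Real.sqrt m := by
    rw [show (1:ℝ) = Real.sqrt 1 by rw [Real.sqrt_one]]
    exact Real.sqrt_le_sqrt (by exact_mod_cast hm)
  have hsm0 : (0 : ℝ) < Real.sqrt m := lt_of_lt_of_le one_pos hsm1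
  have hLσ0 : 0 ≤ L_σ := (abs_nonneg _).trans (hd 1 le_rfl hL s)
  set X : ℝ := c₂₀ + R₂ / Real.sqrt m with hX
  have hX0 : 0 ≤ X := by
    have h1 := hW₂ 1 le_rfl hL
    have h2 := specNorm_nonneg (W₂ 1)
    nlinarith
  set K : ℝ := 2 * X + 1 with hK
  have hK0 : 0 ≤ K := by positivity
  -- spectral norm bound of the layer matrices
  have hA : ∀ l, 1 ≤ l → l ≤ L →
      specNorm ((2 * (Real.sqrt m)⁻¹) • (W₂ l)ᵀ - 1) ≤ K := by
    intro l h1 h2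
    refine (specNorm_smul_sub_one_le _ _).trans ?_
    rw [specNorm_transpose]
    have hc : |2 * (Real.sqrt m)⁻¹| = 2 * (Real.sqrt m)⁻¹ := by
      rw [abs_of_nonneg]; positivity
    rw [hc, hK]
    have hb := hW₂ l h1 h2
    have h3 : 2 * (Real.sqrt m)⁻¹ * specNorm (W₂ l)
        ≤ 2 * (Real.sqrt m)⁻¹ * (X * Real.sqrt m) :=
      mul_le_mul_of_nonneg_left hb (by positivity)
    have h4 : 2 * (Real.sqrt m)⁻¹ * (X * Real.sqrt m) = 2 * X := by
      field_simp
    linarith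
  -- one step of the recursion
  have step : ∀ l, 1 ≤ l → l ≤ L → ‖b (l - 1)‖ ≤ (L_σ * K) * ‖b l‖ := by
    intro l h1 h2
    rw [hbrec l h1 h2]
    have hDv := diag_mulVec_norm_le (d l) L_σ hLσ0 (hd l h1 h2) (b l)
    have hAv := mulVec_norm_le ((2 * (Real.sqrt m)⁻¹) • (W₂ l)ᵀ - 1)
      ((WithLp.equiv 2 (Fin m → ℝ)).symm
        ((Matrix.diagonal (d l)).mulVec (WithLp.equiv 2 (Fin m → ℝ) (b l))))
    simp only [Equiv.apply_symm_apply] at hAv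
    have h5 := mul_le_mul (hA l h1 h2) hDv (norm_nonneg _) hK0
    refine hAv.trans (h5.trans (le_of_eq ?_))
    ring
  -- base case
  have hbase : ‖b L‖ ≤ 1 := by
    rw [hbL, norm_smul, EuclideanSpace.norm_single]
    rw [Real.norm_eq_abs, abs_of_nonneg (by positivity : (0:ℝ) ≤ (Real.sqrt m)⁻¹)]
    have : (Real.sqrt m)⁻¹ ≤ 1 := by
      rw [inv_le_one_iff₀]; right; exact hsm1
    simpa using this
  -- main induction
  have main : ∀ j, j ≤ L → ‖b (L - j)‖ ≤ (L_σ * K) ^ j := by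
    intro j
    induction j with
    | zero => intro _; simpa using hbase
    | succ j ih =>
        intro hj
        have hj' : j ≤ L := Nat.le_of_succ_le hj
        have h1 : 1 ≤ L - j := by omega
        have h2 : L - j ≤ L := by omega
        have he : L - (j + 1) = (L - j) - 1 := by omega
        rw [he]
        calc ‖b ((L - j) - 1)‖ ≤ (L_σ * K) * ‖b (L - j)‖ := step (L - j) h1 h2
          _ ≤ (L_σ * K) * (L_σ * K) ^ j :=
              mul_le_mul_of_nonneg_left (ih hj') (by positivity)
          _ = (L_σ * K) ^ (j + 1) := by ring
  have first : ∀ l ≤ L, ‖b l‖ ≤ L_σ ^ (L - l) * K ^ (L - l) := by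
    intro l hl
    have h := main (L - l) (by omega)
    rw [show L - (L - l) = l by omega] at h
    calc ‖b l‖ ≤ (L_σ * K) ^ (L - l) := h
      _ = L_σ ^ (L - l) * K ^ (L - l) := mul_pow _ _ _
  refine ⟨first, ?_⟩
  intro h0 l hl
  have := first l hl
  rw [hK, hX, h0] at this
  simpa using this
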